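/- For every n ≥ 2, there exist continuous functions ψ^{pq} : [0,1] → [0,1] (for p ∈ {1,…,n}, q ∈ {0,…,2n}), independent of any target function, such that for every continuous function f : [0,1]^n → ℝ there exist continuous functions χ^q : ℝ → ℝ (for q ∈ {0,…,2n}) with f(x_1,…,x_n) = Σ_{q=0}^{2n} χ^q( Σ_{p=1}^n ψ^{pq}(x_p) ) for all (x_1,…,x_n) ∈ [0,1]^n. -/
import Mathlib

namespace KST

noncomputable section

/-- distance from `x` to the interval `[a,b]` (when `a ≤ b`). -/
def dI (a b x : ℝ) : ℝ := max 0 (max (a - x) (x - b))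

lemma dI_nonneg (a b x : ℝ) : 0 ≤ dI a b x := le_max_left _ _

lemma continuous_dI (a b : ℝ) : Continuous (dI a b) := by
  unfold dI; fun_prop

lemma dI_eq_zero {a b x : ℝ} (hx : x ∈ Set.Icc a b) : dI a b x = 0 := by
  rcases hx with ⟨h1, h2⟩
  unfold dI
  rw [max_eq_left]
  exact max_le (by linarith) (by linarith)

lemma dI_ge {a b x h : ℝ} (hx : x ≤ a - h ∨ b + h ≤ x) : h ≤ dI a b x := by
  unfold dI
  rcases hx with h1 | h1
  · exact le_trans (by linarith : h ≤ a - x) (le_trans (le_max_left _ _) (le_max_right _ _))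
  · exact le_trans (by linarith : h ≤ x - b) (le_trans (le_max_right _ _) (le_max_right _ _))

lemma dI_lt {a b x h : ℝ} (hh : 0 < h) (hx : dI a b x < h) : a - h < x ∧ x < b + h := by
  unfold dI at hx
  constructor
  · nlinarith [le_max_left (a - x) (x - b), le_max_right (0:ℝ) (max (a - x) (x - b))]
  · nlinarith [le_max_right (a - x) (x - b), le_max_right (0:ℝ) (max (a - x) (x - b))]

/-- bump function: 1 on `[a,b]`, 0 outside `(a-h, b+h)`. -/
def bump (h a b x : ℝ) : ℝ := max 0 (1 - dI a b x / h)

lemma bump_nonneg (h a b x : ℝ) : 0 ≤ bump h a b x := le_max_left _ _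

lemma bump_le_one {h : ℝ} (hh : 0 < h) (a b x : ℝ) : bump h a b x ≤ 1 := by
  unfold bump
  have := dI_nonneg a b x
  have : 0 ≤ dI a b x / h := by positivity
  apply max_le <;> linarith

lemma continuous_bump {h : ℝ} (hh : 0 < h) (a b : ℝ) : Continuous (bump h a b) := by
  unfold bump
  have := continuous_dI a b
  fun_prop

lemma bump_eq_one {h a b x : ℝ} (hh : 0 < h) (hx : x ∈ Set.Icc a b) : bump h a b x = 1 := by
  unfold bump
  rw [dI_eq_zero hx]
  simp

lemma bump_eq_zero {h a b x : ℝ} (hh : 0 < h) (hx : x ≤ a - h ∨ b + h ≤ x) :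
    bump h a b x = 0 := by
  unfold bump
  have := dI_ge hx
  rw [max_eq_left]
  have : 1 ≤ dI a b x / h := (one_le_div hh).2 this
  linarith

lemma bump_ne_zero {h a b x : ℝ} (hh : 0 < h) (hx : bump h a b x ≠ 0) :
    a - h < x ∧ x < b + h := by
  apply dI_lt hh
  by_contra hc
  push_neg at hc
  apply hx
  unfold bump
  rw [max_eq_left]
  have : 1 ≤ dI a b x / h := (one_le_div hh).2 hc
  linarith

/-- plateau bump: 1 on `[V-σ, V+σ]`, 0 outside `(V-2σ, V+2σ)`. -/
def tent (σ V y : ℝ) : ℝ := max 0 (min 1 (2 - |y - V| / σ))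

lemma tent_nonneg (σ V y : ℝ) : 0 ≤ tent σ V y := le_max_left _ _

lemma tent_le_one {σ : ℝ} (hσ : 0 < σ) (V y : ℝ) : tent σ V y ≤ 1 := by
  unfold tent
  apply max_le
  · linarith
  · exact min_le_left _ _

lemma continuous_tent {σ : ℝ} (hσ : 0 < σ) (V : ℝ) : Continuous (tent σ V) := by
  unfold tent; fun_prop

lemma tent_eq_one {σ V y : ℝ} (hσ : 0 < σ) (hy : |y - V| ≤ σ) : tent σ V y = 1 := by
  unfold tent
  have h1 : |y - V| / σ ≤ 1 := (div_le_one hσ).2 hy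
  rw [min_eq_left (by linarith), max_eq_right (by linarith)]

lemma tent_eq_zero {σ V y : ℝ} (hσ : 0 < σ) (hy : 2 * σ ≤ |y - V|) : tent σ V y = 0 := by
  unfold tent
  have h1 : (2:ℝ) ≤ |y - V| / σ := by
    rw [le_div_iff₀ hσ]; linarith
  rw [max_eq_left]
  exact le_trans (min_le_right _ _) (by linarith)

/-- base-M uniqueness of digit expansions. -/
lemma digits_unique : ∀ (n M : ℕ) (d d' : Fin n → ℕ), (∀ p, d p < M) → (∀ p, d' p < M) →
    (∑ p, d p * M ^ (p : ℕ)) = (∑ p, d' p * M ^ (p : ℕ)) → d = d' := by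
  intro n
  induction n with
  | zero => intro M d d' _ _ _; ext p; exact absurd p.2 (by omega)
  | succ n ih =>
    intro M d d' hd hd' hsum
    rw [Fin.sum_univ_succ, Fin.sum_univ_succ] at hsum
    simp only [Fin.val_succ, pow_succ, Fin.val_zero, pow_zero, mul_one] at hsum
    have hM : 0 < M := Nat.pos_of_ne_zero (by rintro rfl; exact absurd (hd 0) (by omega))
    have key : ∀ p : Fin n, d p.succ * (M ^ (p:ℕ) * M) = (d p.succ * M ^ (p:ℕ)) * M := by
      intro p; ring
    have key' : ∀ p : Fin n, d' p.succ * (M ^ (p:ℕ) * M) = (d' p.succ * M ^ (p:ℕ)) * M := by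
      intro p; ring
    simp only [key, key'] at hsum
    rw [← Finset.sum_mul, ← Finset.sum_mul] at hsum
    have h0 : d 0 = d' 0 := by
      have := congrArg (· % M) hsum
      simpa [Nat.add_mul_mod_self_right, Nat.mod_eq_of_lt (hd 0), Nat.mod_eq_of_lt (hd' 0)]
        using this
    have htail : (∑ p : Fin n, d p.succ * M ^ (p:ℕ)) = ∑ p : Fin n, d' p.succ * M ^ (p:ℕ) := by
      have h1 : (∑ p : Fin n, d p.succ * M ^ (p:ℕ)) * M = (∑ p : Fin n, d' p.succ * M ^ (p:ℕ)) * M := by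
        omega
      exact Nat.eq_of_mul_eq_mul_right hM h1
    have := ih M (fun p => d p.succ) (fun p => d' p.succ) (fun p => hd p.succ)
      (fun p => hd' p.succ) htail
    ext p
    rcases Fin.eq_zero_or_eq_succ p with rfl | ⟨j, rfl⟩
    · exact h0
    · exact congrFun this j

/-- bound for a sum of weighted terms with essentially disjoint supports. -/
lemma sum_bound_of_unique {α : Type*} [DecidableEq α] (T : Finset α) (w u : α → ℝ) (B : ℝ)
    (hB : 0 ≤ B)
    (hu0 : ∀ t, 0 ≤ u t) (hu1 : ∀ t, u t ≤ 1)
    (huniq : ∀ t ∈ T, ∀ t' ∈ T, u t ≠ 0 → u t' ≠ 0 → t = t')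
    (hw : ∀ t ∈ T, |w t| ≤ B) :
    |∑ t ∈ T, w t * u t| ≤ B := by
  classical
  by_cases hex : ∃ t₀ ∈ T, u t₀ ≠ 0
  · obtain ⟨t₀, ht₀, hu⟩ := hex
    have : ∑ t ∈ T, w t * u t = w t₀ * u t₀ := by
      apply Finset.sum_eq_single_of_mem t₀ ht₀
      intro t ht hne
      by_cases h : u t = 0
      · rw [h, mul_zero]
      · exact absurd (huniq t ht t₀ ht₀ h hu) hne
    rw [this, abs_mul]
    calc |w t₀| * |u t₀| ≤ B * 1 := by
          apply mul_le_mul (hw t₀ ht₀) _ (abs_nonneg _) hB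
          rw [abs_of_nonneg (hu0 t₀)]; exact hu1 t₀
      _ = B := mul_one B
  · push_neg at hex
    have : ∑ t ∈ T, w t * u t = 0 := Finset.sum_eq_zero (fun t ht => by rw [hex t ht, mul_zero])
    rw [this, abs_zero]; exact hB


/-- `x` is covered by family `q`'s intervals at mesh `h`. -/
def Cov (N : ℕ) (h x : ℝ) (q : ℕ) : Prop :=
  ∃ i : ℤ, -2 ≤ i ∧ i ≤ ⌈1/h⌉ ∧
    ((i * N + q : ℤ) : ℝ) * h ≤ x ∧ x ≤ ((i * N + q + N - 1 : ℤ) : ℝ) * h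

lemma covered (N : ℕ) (hN : 2 ≤ N) (h : ℝ) (hh : 0 < h) (x : ℝ) (hx : x ∈ Set.Icc (0:ℝ) 1)
    (q : ℕ) (hq : q < N) (hbad : (q : ℤ) ≠ (⌊x/h⌋ % N + 1) % N) :
    Cov N h x q := by
  obtain ⟨hx0, hx1⟩ := hx
  set j : ℤ := ⌊x / h⌋ with hj
  have hj0 : 0 ≤ j := Int.floor_nonneg.2 (by positivity)
  have hjle : (j : ℝ) ≤ x / h := Int.floor_le _
  have hjlt : x / h < (j : ℝ) + 1 := Int.lt_floor_add_one _
  have hxh : x / h * h = x := div_mul_cancel₀ x hh.ne'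
  have hjx : (j : ℝ) * h ≤ x := by nlinarith
  have hxj : x < ((j : ℝ) + 1) * h := by nlinarith
  have hjK : j ≤ ⌈1/h⌉ := by
    have h1 : (j : ℝ) ≤ 1 / h := le_trans hjle (by gcongr)
    have h2 : (1:ℝ)/h ≤ (⌈1/h⌉ : ℝ) := Int.le_ceil _
    exact_mod_cast le_trans h1 h2
  have hNz : (N : ℤ) ≠ 0 := by positivity
  have hN0 : (0:ℤ) < N := by positivity
  set r : ℤ := j % N with hr
  set a : ℤ := j / N with ha
  have hdm : (N:ℤ) * a + r = j := Int.mul_ediv_add_emod j N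
  have hr0 : 0 ≤ r := Int.emod_nonneg j hNz
  have hrN : r < N := Int.emod_lt_of_pos j hN0
  have ha0 : 0 ≤ a := Int.ediv_nonneg hj0 (le_of_lt hN0)
  have haj : a ≤ j := by nlinarith
  rcases lt_or_ge r q with hc | hc
  · -- r < q : use i = a - 1, need r ≤ q - 2
    have hr2 : r ≤ (q:ℤ) - 2 := by
      by_contra hcon
      push_neg at hcon
      have : r = (q:ℤ) - 1 := by omega
      apply hbad
      rw [this]
      have : ((q:ℤ) - 1 + 1) = q := by ring
      rw [this]
      exact (Int.emod_eq_of_lt (by positivity) (by exact_mod_cast hq)).symm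
    refine ⟨a - 1, by omega, by omega, ?_, ?_⟩
    · have hle : ((a-1) * N + q : ℤ) ≤ j := by nlinarith
      calc (((a-1) * N + q : ℤ) : ℝ) * h ≤ (j:ℝ) * h := by
            apply mul_le_mul_of_nonneg_right _ (le_of_lt hh); exact_mod_cast hle
        _ ≤ x := hjx
    · have hle : (j + 1 : ℤ) ≤ ((a-1) * N + q + N - 1 : ℤ) := by nlinarith
      calc x ≤ ((j:ℝ) + 1) * h := le_of_lt hxj
        _ ≤ (((a-1) * N + q + N - 1 : ℤ) : ℝ) * h := by
            apply mul_le_mul_of_nonneg_right _ (le_of_lt hh)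
            exact_mod_cast hle
  · -- q ≤ r : use i = a, need r ≤ q + N - 2
    have hr2 : r ≤ (q:ℤ) + N - 2 := by
      by_contra hcon
      push_neg at hcon
      have hq0 : (q:ℤ) = 0 ∧ r = (N:ℤ) - 1 := by omega
      apply hbad
      rw [hq0.1, hq0.2]
      have : ((N:ℤ) - 1 + 1) = N := by ring
      rw [this, Int.emod_self]
    refine ⟨a, by omega, by omega, ?_, ?_⟩
    · have hle : (a * N + q : ℤ) ≤ j := by nlinarith
      calc ((a * N + q : ℤ) : ℝ) * h ≤ (j:ℝ) * h := by
            apply mul_le_mul_of_nonneg_right _ (le_of_lt hh); exact_mod_cast hle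
        _ ≤ x := hjx
    · have hle : (j + 1 : ℤ) ≤ (a * N + q + N - 1 : ℤ) := by nlinarith
      calc x ≤ ((j:ℝ) + 1) * h := le_of_lt hxj
        _ ≤ ((a * N + q + N - 1 : ℤ) : ℝ) * h := by
            apply mul_le_mul_of_nonneg_right _ (le_of_lt hh)
            exact_mod_cast hle

lemma cov_unique (N : ℕ) (hN : 2 ≤ N) (h : ℝ) (hh : 0 < h) (x : ℝ)
    (hx : x ∈ Set.Icc (0:ℝ) 1) (q q' : ℕ) (hq : q < N) (hq' : q' < N)
    (h1 : ¬ Cov N h x q) (h2 : ¬ Cov N h x q') : q = q' := by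
  by_contra hne
  rcases eq_or_ne (q:ℤ) ((⌊x/h⌋ % N + 1) % N) with he | he
  · rcases eq_or_ne (q':ℤ) ((⌊x/h⌋ % N + 1) % N) with he' | he'
    · exact hne (by exact_mod_cast he.trans he'.symm)
    · exact h2 (covered N hN h hh x hx q' hq' he')
  · exact h1 (covered N hN h hh x hx q hq he)


/-! ### grid lemmas -/

def glo (N q : ℕ) (h : ℝ) (i : ℤ) : ℝ := ((i * N + q : ℤ) : ℝ) * h
def ghi (N q : ℕ) (h : ℝ) (i : ℤ) : ℝ := glo N q h i + ((N:ℝ) - 1) * h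

lemma ghi_cast (N q : ℕ) (h : ℝ) (i : ℤ) :
    ((i * N + q + N - 1 : ℤ) : ℝ) * h = ghi N q h i := by
  unfold ghi glo; push_cast; ring

lemma grid_disj {N q : ℕ} (hN : 2 ≤ N) {h : ℝ} (hh : 0 < h) {i i' : ℤ} (hne : i' ≠ i)
    {x : ℝ} (hx : x ∈ Set.Icc (glo N q h i) (ghi N q h i)) :
    bump h (glo N q h i') (ghi N q h i') x = 0 := by
  obtain ⟨h1, h2⟩ := hx
  apply bump_eq_zero hh
  rcases lt_or_gt_of_ne hne with hlt | hgt
  · -- i' < i : x ≥ glo i ≥ ghi i' + h, i.e. ghi i' + h ≤ x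
    right
    have key : ((i' * N + q + N : ℤ) : ℝ) * h ≤ ((i * N + q : ℤ) : ℝ) * h := by
      apply mul_le_mul_of_nonneg_right _ (le_of_lt hh)
      exact_mod_cast (by nlinarith [Int.add_one_le_iff.2 hlt] : (i' * N + q + N : ℤ) ≤ (i * N + q : ℤ))
    have : ghi N q h i' + h = ((i' * N + q + N : ℤ) : ℝ) * h := by
      unfold ghi glo; push_cast; ring
    rw [this]
    unfold glo at h1
    linarith
  · -- i < i' : x ≤ ghi i ≤ glo i' - h
    left
    have key : ((i * N + q + N - 1 : ℤ) : ℝ) * h ≤ ((i' * N + q - 1 : ℤ) : ℝ) * h := by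
      apply mul_le_mul_of_nonneg_right _ (le_of_lt hh)
      exact_mod_cast (by nlinarith [Int.add_one_le_iff.2 hgt] : (i * N + q + N - 1 : ℤ) ≤ (i' * N + q - 1 : ℤ))
    have e1 : ((i * N + q + N - 1 : ℤ) : ℝ) * h = ghi N q h i := ghi_cast N q h i
    have e2 : ((i' * N + q - 1 : ℤ) : ℝ) * h = glo N q h i' - h := by
      unfold glo; push_cast; ring
    rw [e1, e2] at key
    linarith

lemma grid_adj {N q : ℕ} (hN : 2 ≤ N) {h : ℝ} (hh : 0 < h) {i i' : ℤ} {x : ℝ}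
    (h1 : bump h (glo N q h i) (ghi N q h i) x ≠ 0)
    (h2 : bump h (glo N q h i') (ghi N q h i') x ≠ 0) : i' ≤ i + 1 := by
  obtain ⟨ha, _⟩ := bump_ne_zero hh h2
  obtain ⟨_, hb⟩ := bump_ne_zero hh h1
  -- glo i' - h < x < ghi i + h
  by_contra hcon
  push_neg at hcon
  have hii : i + 2 ≤ i' := by omega
  have key : ((i * N + q + N : ℤ) : ℝ) ≤ ((i' * N + q - N : ℤ) : ℝ) := by
    exact_mod_cast (by nlinarith : (i * N + q + N : ℤ) ≤ (i' * N + q - N : ℤ))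
  have hNh : 2 * h ≤ (N:ℝ) * h := by
    have : (2:ℝ) ≤ N := by exact_mod_cast hN
    nlinarith
  have e1 : ghi N q h i + h = ((i * N + q + N : ℤ) : ℝ) * h := by
    unfold ghi glo; push_cast; ring
  have e2 : glo N q h i' - (N:ℝ)*h = ((i' * N + q - N : ℤ) : ℝ) * h := by
    unfold glo; push_cast; ring
  have : ghi N q h i + h ≤ glo N q h i' - (N:ℝ)*h := by
    rw [e1, e2]
    exact mul_le_mul_of_nonneg_right key (le_of_lt hh)
  linarith

lemma snap_close {γ y : ℝ} (hγ : 0 < γ) : |γ * ⌊y / γ⌋ - y| ≤ γ := by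
  have h1 : (⌊y / γ⌋ : ℝ) ≤ y / γ := Int.floor_le _
  have h2 : y / γ < ⌊y / γ⌋ + 1 := Int.lt_floor_add_one _
  have h3 : γ * (⌊y / γ⌋ : ℝ) ≤ y := by
    have := mul_le_mul_of_nonneg_left h1 (le_of_lt hγ)
    rwa [mul_div_cancel₀ y hγ.ne'] at this
  have h4 : y < γ * (⌊y / γ⌋ : ℝ) + γ := by
    have := mul_lt_mul_of_pos_left h2 hγ
    rw [mul_div_cancel₀ y hγ.ne'] at this
    linarith [this]
  rw [abs_le]; constructor <;> linarith

/-! ### the inductive step -/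

lemma sep_core (γ δ m : ℝ) (hγ : 0 < γ) (hδ : 0 < δ) (hmδ : m ≤ δ) (hδγ : δ ≤ γ/2)
    (Z : ℤ) (D D' : ℕ) (hne : D ≠ D') (hbound : δ * |(D:ℝ) - (D':ℝ)| ≤ γ/4) :
    m ≤ |γ * (Z:ℝ) + δ * ((D:ℝ) - (D':ℝ))| := by
  have hDabs : 1 ≤ |(D:ℝ) - (D':ℝ)| := by
    have h1 : (D:ℤ) ≠ (D':ℤ) := by exact_mod_cast hne
    have h2 : 1 ≤ |(D:ℤ) - (D':ℤ)| := Int.one_le_abs (sub_ne_zero.2 h1)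
    have h3 : (1:ℝ) ≤ |((D:ℤ) - (D':ℤ) : ℤ)| := by exact_mod_cast h2
    rw [Int.cast_abs] at h3
    push_cast at h3
    exact h3
  rcases eq_or_ne Z 0 with hZ | hZ
  · rw [hZ]
    simp only [Int.cast_zero, mul_zero, zero_add]
    rw [abs_mul, abs_of_nonneg (le_of_lt hδ)]
    calc m ≤ δ := hmδ
      _ = δ * 1 := (mul_one δ).symm
      _ ≤ δ * |(D:ℝ) - (D':ℝ)| := mul_le_mul_of_nonneg_left hDabs (le_of_lt hδ)
  · have hZ1 : 1 ≤ |(Z:ℝ)| := by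
      have h2 : 1 ≤ |Z| := Int.one_le_abs hZ
      have h3 : (1:ℝ) ≤ |(Z:ℤ)| := by exact_mod_cast h2
      rwa [Int.cast_abs] at h3
    have h1 : γ ≤ |γ * (Z:ℝ)| := by
      rw [abs_mul, abs_of_nonneg (le_of_lt hγ)]
      nlinarith
    have h2 : |δ * ((D:ℝ) - (D':ℝ))| ≤ γ/4 := by
      rw [abs_mul, abs_of_nonneg (le_of_lt hδ)]
      exact hbound
    calc m ≤ δ := hmδ
      _ ≤ γ/2 := hδγ
      _ ≤ γ - γ/4 := by linarith
      _ ≤ |γ * (Z:ℝ)| - |δ * ((D:ℝ) - (D':ℝ))| := sub_le_sub h1 h2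
      _ ≤ |γ * (Z:ℝ) + δ * ((D:ℝ) - (D':ℝ))| := by
          have := abs_add_le (γ * (Z:ℝ) + δ * ((D:ℝ) - (D':ℝ))) (-(δ * ((D:ℝ) - (D':ℝ))))
          simp only [add_neg_cancel_right, abs_neg] at this
          linarith

set_option maxHeartbeats 1600000 in
lemma step (n N : ℕ) (hn : 1 ≤ n) (hN : 2 ≤ N)
    (Ψ : Fin n → Fin N → ℝ → ℝ) (hΨ : ∀ p q, Continuous (Ψ p q))
    (β hbound mbound : ℝ) (hβ : 0 < β) (hhb : 0 < hbound) (hmb : 0 < mbound) :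
    ∃ (h m : ℝ) (c : Fin n → Fin N → ℤ → ℝ) (g : Fin n → Fin N → ℝ → ℝ),
      (0 < h ∧ h ≤ hbound) ∧ (0 < m ∧ m ≤ mbound) ∧
      (∀ p q, Continuous (g p q)) ∧
      (∀ p q x, |g p q x| ≤ β) ∧
      (∀ (p : Fin n) (q : Fin N), ∀ i : ℤ, -2 ≤ i → i ≤ ⌈1/h⌉ →
        ∀ x ∈ Set.Icc (glo N q h i) (ghi N q h i),
          Ψ p q x + g p q x = c p q i) ∧
      (∀ q : Fin N, ∀ t t' : Fin n → ℤ,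
        (∀ p, -2 ≤ t p ∧ t p ≤ ⌈1/h⌉) → (∀ p, -2 ≤ t' p ∧ t' p ≤ ⌈1/h⌉) → t ≠ t' →
        m ≤ |(∑ p, c p q (t p)) - ∑ p, c p q (t' p)|) := by
  classical
  set γ : ℝ := β / 8 with hγdef
  have hγ : 0 < γ := by positivity
  set Φ : ℝ → (Fin n × Fin N → ℝ) := fun x pq => Ψ pq.1 pq.2 x with hΦdef
  have hΦc : Continuous Φ := continuous_pi (fun pq => hΨ pq.1 pq.2)
  set C : Set ℝ := Set.Icc (-(4*(N:ℝ))) (4*N) with hCdef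
  have hUC : UniformContinuousOn Φ C :=
    isCompact_Icc.uniformContinuousOn_of_continuous hΦc.continuousOn
  rw [Metric.uniformContinuousOn_iff_le] at hUC
  obtain ⟨d, hd, hmod⟩ := hUC γ hγ
  have hmod' : ∀ (p : Fin n) (q : Fin N) (x y : ℝ), x ∈ C → y ∈ C → |x - y| ≤ d →
      |Ψ p q x - Ψ p q y| ≤ γ := by
    intro p q x y hx hy hxy
    have h1 := hmod x hx y hy (by rwa [Real.dist_eq])
    have h2 := dist_le_pi_dist (Φ x) (Φ y) (p, q)
    rw [Real.dist_eq] at h2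
    exact le_trans h2 h1
  have hN0 : (0:ℝ) < N := by positivity
  have hN2 : (2:ℝ) ≤ N := by exact_mod_cast hN
  set h : ℝ := min hbound (min 1 (d / (4*N))) with hhdef
  have hh : 0 < h := lt_min hhb (lt_min one_pos (by positivity))
  have hh1 : h ≤ 1 := le_trans (min_le_right _ _) (min_le_left _ _)
  have hhb' : h ≤ hbound := min_le_left _ _
  have hhd : h * (4*N) ≤ d := by
    have h1 : h ≤ d / (4*N) := le_trans (min_le_right _ _) (min_le_right _ _)
    rw [le_div_iff₀ (by positivity)] at h1
    linarith
  set K : ℤ := ⌈1/h⌉ with hKdef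
  have hKr : (1:ℝ)/h ≤ (K:ℝ) := Int.le_ceil _
  have hK1 : 1 ≤ K := by
    have h1 : (1:ℝ) ≤ 1/h := by rw [le_div_iff₀ hh]; linarith
    exact_mod_cast (le_trans h1 hKr : (1:ℝ) ≤ (K:ℝ))
  have hKh : (K:ℝ) ≤ 1/h + 1 := by
    have := Int.ceil_lt_add_one (1/h)
    rw [← hKdef] at this
    linarith
  set M : ℕ := (K + 3).toNat with hMdef
  have hM4 : 4 ≤ M := by omega
  have hMK : (K:ℝ) + 3 = (M:ℝ) := by
    have h1 : ((K+3 : ℤ) : ℝ) = ((M:ℕ) : ℝ) := by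
      rw [hMdef]
      norm_cast
      omega
    push_cast at h1
    linarith
  set Mn : ℝ := (M:ℝ)^n with hMndef
  have hM1 : (1:ℝ) ≤ (M:ℝ) := by exact_mod_cast (by omega : 1 ≤ M)
  have hMn1 : 1 ≤ Mn := one_le_pow₀ hM1
  set δ : ℝ := γ / (1 + 4*(n+1)*Mn) with hδdef
  have hδ : 0 < δ := by positivity
  have hδγ : δ * (4*(n+1)*Mn) ≤ γ := by
    rw [hδdef, div_mul_eq_mul_div, div_le_iff₀ (by positivity)]
    nlinarith
  have hn0 : (0:ℝ) ≤ (n:ℝ) := Nat.cast_nonneg n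
  have hup : (4:ℝ) ≤ 4*((n:ℝ)+1)*Mn := by nlinarith
  have hδq : δ * ((n:ℝ)*Mn) ≤ γ/4 := by
    have h1 : δ * (4*((n:ℝ)*Mn)) ≤ δ * (4*((n:ℝ)+1)*Mn) := by
      apply mul_le_mul_of_nonneg_left _ (le_of_lt hδ)
      nlinarith
    linarith
  have hδhalf : δ ≤ γ / 2 := by
    have h1 : δ * 4 ≤ δ * (4*((n:ℝ)+1)*Mn) := by
      apply mul_le_mul_of_nonneg_left hup (le_of_lt hδ)
    linarith
  set dig : ℤ → ℕ := fun i => (i + 2).toNat with hdigdef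
  set c : Fin n → Fin N → ℤ → ℝ :=
    fun p q i => γ * ⌊Ψ p q (glo N q h i) / γ⌋ + δ * ((dig i * M ^ (p:ℕ) : ℕ) : ℝ) with hcdef
  set g : Fin n → Fin N → ℝ → ℝ :=
    fun p q x => ∑ i ∈ Finset.Icc (-2 : ℤ) K,
      (c p q i - Ψ p q x) * bump h (glo N (q:ℕ) h i) (ghi N (q:ℕ) h i) x with hgdef
  -- facts about the window
  have hNh1 : (N:ℝ)*h ≤ (N:ℝ) := by nlinarith
  have hNhd : (N:ℝ)*h ≤ d := by nlinarith
  have hhNh : h ≤ (N:ℝ)*h := by nlinarith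
  have hloB : ∀ (q : Fin N) (i : ℤ), i ∈ Finset.Icc (-2:ℤ) K →
      -(2*(N:ℝ)) ≤ glo N q h i ∧ glo N q h i ≤ 3*(N:ℝ) := by
    intro q i hi
    rw [Finset.mem_Icc] at hi
    have hq0 : (0:ℝ) ≤ ((q:ℕ):ℝ) := by positivity
    have hqN : ((q:ℕ):ℝ) ≤ N := by exact_mod_cast le_of_lt q.2
    have hi1 : (-2:ℝ) ≤ (i:ℝ) := by exact_mod_cast hi.1
    have hi2 : (i:ℝ) ≤ (K:ℝ) := by exact_mod_cast hi.2
    have hE2 : (-2:ℝ)*(N:ℝ) ≤ (i:ℝ)*(N:ℝ) + ((q:ℕ):ℝ) := by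
      have := mul_le_mul_of_nonneg_right hi1 (le_of_lt hN0)
      linarith
    have hglo : glo N (q:ℕ) h i = ((i:ℝ)*(N:ℝ) + ((q:ℕ):ℝ)) * h := by
      unfold glo; push_cast; ring
    constructor
    · rw [hglo]
      have h1 : (-2*(N:ℝ))*h ≤ ((i:ℝ)*(N:ℝ) + ((q:ℕ):ℝ)) * h :=
        mul_le_mul_of_nonneg_right hE2 (le_of_lt hh)
      have h2 : (0:ℝ) ≤ 2*(N:ℝ)*(1-h) := by
        apply mul_nonneg (by linarith) (by linarith)
      linarith
    · rw [hglo]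
      have hKhh : (K:ℝ) * h ≤ 1 + h := by
        have h1 := mul_le_mul_of_nonneg_right hKh (le_of_lt hh)
        have e : (1/h + 1) * h = 1 + h := by field_simp
        linarith [e ▸ h1]
      have hEU : ((i:ℝ)*(N:ℝ) + ((q:ℕ):ℝ)) ≤ ((K:ℝ)+1)*(N:ℝ) := by
        have := mul_le_mul_of_nonneg_right hi2 (le_of_lt hN0)
        linarith
      have h1 : ((i:ℝ)*(N:ℝ) + ((q:ℕ):ℝ)) * h ≤ ((K:ℝ)+1)*(N:ℝ)*h := by
        apply mul_le_mul_of_nonneg_right hEU (le_of_lt hh)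
      have h2 : ((K:ℝ)+1)*(N:ℝ)*h = ((K:ℝ)*h)*(N:ℝ) + (N:ℝ)*h := by ring
      have h3 : ((K:ℝ)*h)*(N:ℝ) ≤ (1+h)*(N:ℝ) := by
        apply mul_le_mul_of_nonneg_right hKhh (le_of_lt hN0)
      have h5 : (1+h)*(N:ℝ) ≤ 2*(N:ℝ) := by nlinarith
      linarith
  have hloC : ∀ (q : Fin N) (i : ℤ), i ∈ Finset.Icc (-2:ℤ) K → glo N q h i ∈ C := by
    intro q i hi
    obtain ⟨h1, h2⟩ := hloB q i hi
    constructor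
    · show -(4*(N:ℝ)) ≤ glo N q h i
      linarith
    · show glo N (q:ℕ) h i ≤ 4*(N:ℝ)
      linarith
  have hwinC : ∀ (q : Fin N) (i : ℤ), i ∈ Finset.Icc (-2:ℤ) K → ∀ x : ℝ,
      bump h (glo N (q:ℕ) h i) (ghi N (q:ℕ) h i) x ≠ 0 →
      x ∈ C ∧ |x - glo N (q:ℕ) h i| ≤ d := by
    intro q i hi x hbx
    obtain ⟨hx1, hx2⟩ := bump_ne_zero hh hbx
    obtain ⟨hl1, hl2⟩ := hloB q i hi
    have hghi : ghi N (q:ℕ) h i + h = glo N (q:ℕ) h i + (N:ℝ) * h := by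
      unfold ghi; ring
    have hxd : |x - glo N (q:ℕ) h i| ≤ d := by
      rw [abs_le]
      constructor
      · linarith
      · linarith
    refine ⟨⟨?_, ?_⟩, hxd⟩
    · show -(4*(N:ℝ)) ≤ x
      linarith
    · show x ≤ 4*(N:ℝ)
      linarith
  have hcΨ : ∀ (p : Fin n) (q : Fin N) (i : ℤ), i ∈ Finset.Icc (-2:ℤ) K →
      |c p q i - Ψ p q (glo N (q:ℕ) h i)| ≤ 2*γ := by
    intro p q i hi
    rw [Finset.mem_Icc] at hi
    have h1 : |γ * ⌊Ψ p q (glo N q h i) / γ⌋ - Ψ p q (glo N q h i)| ≤ γ := snap_close hγ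
    have hdigM : (dig i : ℝ) ≤ (M:ℝ) - 1 := by
      have : dig i ≤ M - 1 := by
        simp only [hdigdef, hMdef]
        omega
      have hcast : ((dig i : ℕ):ℝ) ≤ ((M - 1 : ℕ):ℝ) := by exact_mod_cast this
      have : ((M - 1 : ℕ):ℝ) = (M:ℝ) - 1 := by
        have : (1:ℕ) ≤ M := by omega
        push_cast [this]
        ring
      linarith
    have hMp : (M:ℝ) ^ (p:ℕ) ≤ (M:ℝ)^(n-1) := by
      apply pow_le_pow_right₀ hM1
      omega
    have h2 : ((dig i * M ^ (p:ℕ) : ℕ) : ℝ) ≤ Mn := by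
      push_cast
      have hMn : (M:ℝ) * (M:ℝ)^(n-1) = Mn := by
        rw [hMndef, ← pow_succ']
        congr 1
        omega
      calc (dig i : ℝ) * (M:ℝ)^(p:ℕ) ≤ ((M:ℝ) - 1) * (M:ℝ)^(n-1) := by
            apply mul_le_mul hdigM hMp (by positivity) (by linarith)
        _ ≤ Mn := by nlinarith [pow_pos (lt_of_lt_of_le one_pos hM1) (n-1)]
    have h3 : δ * ((dig i * M ^ (p:ℕ) : ℕ) : ℝ) ≤ γ := by
      calc δ * ((dig i * M ^ (p:ℕ) : ℕ) : ℝ) ≤ δ * Mn := by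
            apply mul_le_mul_of_nonneg_left h2 (le_of_lt hδ)
        _ ≤ γ := by nlinarith
    have h4 : 0 ≤ δ * ((dig i * M ^ (p:ℕ) : ℕ) : ℝ) := by positivity
    rw [hcdef]
    simp only []
    have : γ * ⌊Ψ p q (glo N q h i) / γ⌋ + δ * ((dig i * M ^ (p:ℕ) : ℕ) : ℝ)
        - Ψ p q (glo N q h i)
        = (γ * ⌊Ψ p q (glo N q h i) / γ⌋ - Ψ p q (glo N q h i))
          + δ * ((dig i * M ^ (p:ℕ) : ℕ) : ℝ) := by ring
    rw [this]
    calc |_| ≤ |γ * ⌊Ψ p q (glo N q h i) / γ⌋ - Ψ p q (glo N q h i)|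
          + |δ * ((dig i * M ^ (p:ℕ) : ℕ) : ℝ)| := abs_add_le _ _
      _ ≤ γ + γ := by
          apply add_le_add h1
          rw [abs_of_nonneg h4]
          exact h3
      _ = 2*γ := by ring
  have hcx : ∀ (p : Fin n) (q : Fin N) (i : ℤ), i ∈ Finset.Icc (-2:ℤ) K → ∀ x : ℝ,
      bump h (glo N (q:ℕ) h i) (ghi N (q:ℕ) h i) x ≠ 0 → |c p q i - Ψ p q x| ≤ 3*γ := by
    intro p q i hi x hbx
    obtain ⟨hxC, hxd⟩ := hwinC q i hi x hbx
    have h1 := hcΨ p q i hi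
    have h2 := hmod' p q x (glo N (q:ℕ) h i) hxC (hloC q i hi) hxd
    calc |c p q i - Ψ p q x|
        = |(c p q i - Ψ p q (glo N (q:ℕ) h i)) - (Ψ p q x - Ψ p q (glo N (q:ℕ) h i))| := by
          congr 1; ring
      _ ≤ |c p q i - Ψ p q (glo N (q:ℕ) h i)| + |Ψ p q x - Ψ p q (glo N (q:ℕ) h i)| :=
          abs_sub _ _
      _ ≤ 2*γ + γ := add_le_add h1 h2
      _ = 3*γ := by ring
  refine ⟨h, min δ mbound, c, g, ⟨hh, hhb'⟩, ⟨lt_min hδ hmb, min_le_right _ _⟩, ?_, ?_, ?_, ?_⟩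
  · -- continuity
    intro p q
    rw [hgdef]
    apply continuous_finset_sum
    intro i _
    exact ((continuous_const.sub (hΨ p q)).mul (continuous_bump hh _ _))
  · -- bound |g| ≤ β
    intro p q x
    rw [hgdef]
    simp only []
    set A : Finset ℤ := (Finset.Icc (-2:ℤ) K).filter
      (fun i => bump h (glo N (q:ℕ) h i) (ghi N (q:ℕ) h i) x ≠ 0) with hAdef
    have hsum : ∑ i ∈ Finset.Icc (-2 : ℤ) K,
        (c p q i - Ψ p q x) * bump h (glo N (q:ℕ) h i) (ghi N (q:ℕ) h i) x
        = ∑ i ∈ A, (c p q i - Ψ p q x) * bump h (glo N (q:ℕ) h i) (ghi N (q:ℕ) h i) x := by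
      symm
      apply Finset.sum_filter_of_ne
      intro i _ hne
      intro hb0
      exact hne (by rw [hb0, mul_zero])
    rw [hsum]
    have hterm : ∀ i ∈ A, |(c p q i - Ψ p q x) * bump h (glo N (q:ℕ) h i) (ghi N (q:ℕ) h i) x| ≤ 3*γ := by
      intro i hiA
      rw [hAdef, Finset.mem_filter] at hiA
      rw [abs_mul]
      calc |c p q i - Ψ p q x| * |bump h (glo N (q:ℕ) h i) (ghi N (q:ℕ) h i) x|
          ≤ (3*γ) * 1 := by
            apply mul_le_mul (hcx p q i hiA.1 x hiA.2) _ (abs_nonneg _) (by positivity)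
            rw [abs_of_nonneg (bump_nonneg _ _ _ _)]
            exact bump_le_one hh _ _ _
        _ = 3*γ := mul_one _
    have hcard : A.card ≤ 2 := by
      by_cases hA : A.Nonempty
      · set i₀ := A.min' hA with hi₀
        have hsub : A ⊆ {i₀, i₀ + 1} := by
          intro i' hi'
          have h1 : i₀ ≤ i' := A.min'_le i' hi'
          have hmem : ∀ j ∈ A, bump h (glo N (q:ℕ) h j) (ghi N (q:ℕ) h j) x ≠ 0 := by
            intro j hj
            rw [hAdef, Finset.mem_filter] at hj
            exact hj.2
          have h2 : i' ≤ i₀ + 1 :=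
            grid_adj hN hh (hmem i₀ (A.min'_mem hA)) (hmem i' hi')
          simp only [Finset.mem_insert, Finset.mem_singleton]
          omega
        calc A.card ≤ ({i₀, i₀+1} : Finset ℤ).card := Finset.card_le_card hsub
          _ ≤ 2 := Finset.card_insert_le _ _ |>.trans (by simp)
      · rw [Finset.not_nonempty_iff_eq_empty] at hA
        rw [hA]; simp
    calc |∑ i ∈ A, (c p q i - Ψ p q x) * bump h (glo N (q:ℕ) h i) (ghi N (q:ℕ) h i) x|
        ≤ ∑ i ∈ A, |(c p q i - Ψ p q x) * bump h (glo N (q:ℕ) h i) (ghi N (q:ℕ) h i) x| :=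
          Finset.abs_sum_le_sum_abs _ _
      _ ≤ A.card • (3*γ) := Finset.sum_le_card_nsmul _ _ _ hterm
      _ = (A.card : ℝ) * (3*γ) := by rw [nsmul_eq_mul]
      _ ≤ 2 * (3*γ) := by
          apply mul_le_mul_of_nonneg_right _ (by positivity)
          exact_mod_cast hcard
      _ ≤ β := by rw [hγdef]; linarith
  · -- plateau
    intro p q i h2 hK x hx
    have hiI : i ∈ Finset.Icc (-2:ℤ) K := Finset.mem_Icc.2 ⟨h2, hK⟩
    rw [hgdef]
    simp only []
    have hsum : ∑ j ∈ Finset.Icc (-2 : ℤ) K,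
        (c p q j - Ψ p q x) * bump h (glo N (q:ℕ) h j) (ghi N (q:ℕ) h j) x
        = (c p q i - Ψ p q x) * bump h (glo N (q:ℕ) h i) (ghi N (q:ℕ) h i) x := by
      apply Finset.sum_eq_single_of_mem i hiI
      intro j _ hji
      rw [grid_disj hN hh hji hx, mul_zero]
    rw [hsum, bump_eq_one hh hx, mul_one]
    ring
  · -- separation
    intro q t t' ht ht' htne
    have e1 : ∀ s : Fin n → ℤ, ∑ p, c p q (s p)
        = γ * (((∑ p, ⌊Ψ p q (glo N q h (s p)) / γ⌋ : ℤ)) : ℝ)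
          + δ * (((∑ p, dig (s p) * M ^ (p:ℕ) : ℕ)) : ℝ) := by
      intro s
      rw [hcdef]
      push_cast
      rw [Finset.mul_sum, Finset.mul_sum, ← Finset.sum_add_distrib]
    have hDbound : ∀ (s : Fin n → ℤ), (∀ p, -2 ≤ s p ∧ s p ≤ K) →
        ((∑ p, dig (s p) * M ^ (p:ℕ) : ℕ) : ℝ) ≤ (n:ℝ) * Mn := by
      intro s hs
      have hterm : ∀ p : Fin n, (dig (s p) * M ^ (p:ℕ) : ℕ) ≤ M^n := by
        intro p
        have hdig : dig (s p) ≤ M - 1 := by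
          have h1 := (hs p).1; have h2 := (hs p).2
          simp only [hdigdef, hMdef]
          omega
        have hMp : M ^ (p:ℕ) ≤ M^(n-1) := Nat.pow_le_pow_right (by omega) (by omega)
        calc dig (s p) * M ^ (p:ℕ) ≤ (M-1) * M^(n-1) := Nat.mul_le_mul hdig hMp
          _ ≤ M * M^(n-1) := Nat.mul_le_mul_right _ (by omega)
          _ = M^n := by
              rw [← pow_succ']
              congr 1
              omega
      calc ((∑ p, dig (s p) * M ^ (p:ℕ) : ℕ) : ℝ) ≤ ((∑ _p : Fin n, M^n : ℕ) : ℝ) := by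
            exact_mod_cast Finset.sum_le_sum (fun p _ => hterm p)
        _ = (n:ℝ) * Mn := by
            rw [Finset.sum_const, Finset.card_univ, Fintype.card_fin, smul_eq_mul, hMndef]
            push_cast
            ring
    have hDne : (∑ p, dig (t p) * M ^ (p:ℕ)) ≠ (∑ p, dig (t' p) * M ^ (p:ℕ)) := by
      intro hDD
      apply htne
      have hdigeq : (fun p => dig (t p)) = (fun p => dig (t' p)) := by
        apply digits_unique n M _ _ _ _ hDD
        · intro p
          have h1 := (ht p).1; have h2 := (ht p).2
          simp only [hdigdef, hMdef]
          omega
        · intro p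
          have h1 := (ht' p).1; have h2 := (ht' p).2
          simp only [hdigdef, hMdef]
          omega
      ext p
      have hc := congrFun hdigeq p
      simp only [hdigdef] at hc
      have h1 := (ht p).1
      have h2 := (ht' p).1
      omega
    rw [e1 t, e1 t']
    have hrearr : γ * (((∑ p, ⌊Ψ p q (glo N q h (t p)) / γ⌋ : ℤ)) : ℝ)
          + δ * (((∑ p, dig (t p) * M ^ (p:ℕ) : ℕ)) : ℝ)
        - (γ * (((∑ p, ⌊Ψ p q (glo N q h (t' p)) / γ⌋ : ℤ)) : ℝ)
          + δ * (((∑ p, dig (t' p) * M ^ (p:ℕ) : ℕ)) : ℝ))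
        = γ * ((((∑ p, ⌊Ψ p q (glo N q h (t p)) / γ⌋ : ℤ)
            - (∑ p, ⌊Ψ p q (glo N q h (t' p)) / γ⌋ : ℤ) : ℤ)) : ℝ)
          + δ * ((((∑ p, dig (t p) * M ^ (p:ℕ) : ℕ)) : ℝ)
            - (((∑ p, dig (t' p) * M ^ (p:ℕ) : ℕ)) : ℝ)) := by
      push_cast
      ring
    rw [hrearr]
    apply sep_core γ δ _ hγ hδ (min_le_left _ _) hδhalf _ _ _ hDne
    have b1 := hDbound t ht
    have b2 := hDbound t' ht'
    have habs : |(((∑ p, dig (t p) * M ^ (p:ℕ) : ℕ)) : ℝ)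
        - (((∑ p, dig (t' p) * M ^ (p:ℕ) : ℕ)) : ℝ)| ≤ (n:ℝ) * Mn := by
      rw [abs_le]
      constructor
      · have : (0:ℝ) ≤ (((∑ p, dig (t p) * M ^ (p:ℕ) : ℕ)) : ℝ) := by positivity
        linarith
      · have : (0:ℝ) ≤ (((∑ p, dig (t' p) * M ^ (p:ℕ) : ℕ)) : ℝ) := by positivity
        linarith
    calc δ * |(((∑ p, dig (t p) * M ^ (p:ℕ) : ℕ)) : ℝ)
          - (((∑ p, dig (t' p) * M ^ (p:ℕ) : ℕ)) : ℝ)|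
        ≤ δ * ((n:ℝ) * Mn) := mul_le_mul_of_nonneg_left habs (le_of_lt hδ)
      _ ≤ γ/4 := hδq

/-! ### the recursive construction -/

structure SD (n N : ℕ) where
  g : Fin n → Fin N → ℝ → ℝ
  Psi : Fin n → Fin N → ℝ → ℝ
  h : ℝ
  m : ℝ
  c : Fin n → Fin N → ℤ → ℝ
  cap : ℝ

def Inv (n N : ℕ) (s : SD n N) : Prop :=
  (∀ p q, Continuous (s.Psi p q)) ∧ 0 < s.cap ∧ s.cap ≤ 1 ∧ 0 < s.m

def Good (n N k : ℕ) (s s' : SD n N) : Prop :=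
  (∀ p q x, s'.Psi p q x = s.Psi p q x + s'.g p q x) ∧
  (∀ p q x, |s'.g p q x| ≤ s.cap * (1/2)^(k+1) / (8*(n+1))) ∧
  (0 < s'.h ∧ s'.h ≤ (1/2)^(k+1)) ∧
  (0 < s'.m ∧ s'.m ≤ (1/4)^(k+1)) ∧
  (∀ (p : Fin n) (q : Fin N), ∀ i : ℤ, -2 ≤ i → i ≤ ⌈1/s'.h⌉ →
     ∀ x ∈ Set.Icc (glo N q s'.h i) (ghi N q s'.h i), s'.Psi p q x = s'.c p q i) ∧
  (∀ q : Fin N, ∀ t t' : Fin n → ℤ,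
     (∀ p, -2 ≤ t p ∧ t p ≤ ⌈1/s'.h⌉) → (∀ p, -2 ≤ t' p ∧ t' p ≤ ⌈1/s'.h⌉) → t ≠ t' →
     s'.m ≤ |(∑ p, s'.c p q (t p)) - ∑ p, s'.c p q (t' p)|) ∧
  (s'.cap ≤ s.cap) ∧ (s'.cap ≤ s'.m * 2^(k+1))

lemma exists_good_step (n N : ℕ) (hn : 1 ≤ n) (hN : 2 ≤ N) (k : ℕ) (s : SD n N)
    (hs : Inv n N s) : ∃ s' : SD n N, Inv n N s' ∧ Good n N k s s' := by
  obtain ⟨hcont, hcap, hcap1, hm⟩ := hs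
  have hβ : (0:ℝ) < s.cap * (1/2)^(k+1) / (8*(n+1)) := by positivity
  obtain ⟨h, m, c, g, ⟨hh, hhb⟩, ⟨hm', hmb⟩, hgc, hgb, hpl, hsep⟩ :=
    step n N hn hN s.Psi hcont (s.cap * (1/2)^(k+1) / (8*(n+1))) ((1/2)^(k+1)) ((1/4)^(k+1))
      hβ (by positivity) (by positivity)
  refine ⟨⟨g, fun p q x => s.Psi p q x + g p q x, h, m, c, min s.cap (m * 2^(k+1))⟩,
    ⟨?_, ?_, ?_, ?_⟩, ?_, ?_, ⟨hh, hhb⟩, ⟨hm', hmb⟩, ?_, hsep, ?_, ?_⟩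
  · intro p q
    exact (hcont p q).add (hgc p q)
  · exact lt_min hcap (by positivity)
  · exact le_trans (min_le_left _ _) hcap1
  · exact hm'
  · intro p q x; rfl
  · exact hgb
  · intro p q i h1 h2 x hx
    exact hpl p q i h1 h2 x hx
  · exact min_le_left _ _
  · exact min_le_right _ _

variable (n N : ℕ)

/-- stage-0 data -/
def sd0 : SD n N := ⟨fun _ _ _ => 0, fun _ _ _ => 0, 1, 1, fun _ _ _ => 0, 1⟩

lemma inv0 : Inv n N (sd0 n N) :=
  ⟨fun _ _ => continuous_const, one_pos, le_refl 1, one_pos⟩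

noncomputable def seqD (hn : 1 ≤ n) (hN : 2 ≤ N) : ℕ → {s : SD n N // Inv n N s}
  | 0 => ⟨sd0 n N, inv0 n N⟩
  | (k+1) =>
    let prev := seqD hn hN k
    ⟨Classical.choose (exists_good_step n N hn hN k prev.1 prev.2),
     (Classical.choose_spec (exists_good_step n N hn hN k prev.1 prev.2)).1⟩

lemma seqD_good (hn : 1 ≤ n) (hN : 2 ≤ N) (k : ℕ) :
    Good n N k (seqD n N hn hN k).1 (seqD n N hn hN (k+1)).1 :=
  (Classical.choose_spec (exists_good_step n N hn hN k (seqD n N hn hN k).1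
    (seqD n N hn hN k).2)).2

/-- the stage-k data -/
noncomputable def stg (hn : 1 ≤ n) (hN : 2 ≤ N) (k : ℕ) : SD n N := (seqD n N hn hN k).1

lemma stg_inv (hn : 1 ≤ n) (hN : 2 ≤ N) (k : ℕ) : Inv n N (stg n N hn hN k) :=
  (seqD n N hn hN k).2

lemma stg_good (hn : 1 ≤ n) (hN : 2 ≤ N) (k : ℕ) :
    Good n N k (stg n N hn hN k) (stg n N hn hN (k+1)) := seqD_good n N hn hN k

lemma stg_zero (hn : 1 ≤ n) (hN : 2 ≤ N) : stg n N hn hN 0 = sd0 n N := rfl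

lemma stg_cap_mono (hn : 1 ≤ n) (hN : 2 ≤ N) : ∀ j k : ℕ, j ≤ k →
    (stg n N hn hN k).cap ≤ (stg n N hn hN j).cap := by
  intro j k hjk
  induction k with
  | zero => simp_all
  | succ k ih =>
    rcases Nat.lt_or_ge j (k+1) with hlt | hge
    · have h1 := (stg_good n N hn hN k).2.2.2.2.2.2.1
      exact le_trans h1 (ih (by omega))
    · have : j = k+1 := by omega
      rw [this]

lemma stg_cap_m (hn : 1 ≤ n) (hN : 2 ≤ N) : ∀ k : ℕ,
    (stg n N hn hN k).cap ≤ (stg n N hn hN k).m * 2^k := by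
  intro k
  cases k with
  | zero =>
    rw [stg_zero]
    simp [sd0]
  | succ k =>
    exact (stg_good n N hn hN k).2.2.2.2.2.2.2

lemma stg_g_bound (hn : 1 ≤ n) (hN : 2 ≤ N) (k : ℕ) (p : Fin n) (q : Fin N) (x : ℝ) :
    |(stg n N hn hN (k+1)).g p q x| ≤ (stg n N hn hN k).cap * (1/2)^(k+1) / (8*(n+1)) :=
  (stg_good n N hn hN k).2.1 p q x

lemma stg_g_bound' (hn : 1 ≤ n) (hN : 2 ≤ N) (k : ℕ) (p : Fin n) (q : Fin N) (x : ℝ) :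
    |(stg n N hn hN k).g p q x| ≤ (1/2)^k := by
  cases k with
  | zero =>
    rw [stg_zero]
    simp [sd0]
  | succ k =>
    have h1 := stg_g_bound n N hn hN k p q x
    have h2 : (stg n N hn hN k).cap ≤ 1 := (stg_inv n N hn hN k).2.2.1
    have h3 : (0:ℝ) < 8*((n:ℝ)+1) := by positivity
    have h4 : (stg n N hn hN k).cap * (1/2)^(k+1) / (8*(n+1)) ≤ (1/2)^(k+1) := by
      rw [div_le_iff₀ h3]
      have h5 : (0:ℝ) ≤ ((1:ℝ)/2)^(k+1) := by positivity
      nlinarith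
    exact le_trans h1 h4

lemma stg_psi_sum (hn : 1 ≤ n) (hN : 2 ≤ N) : ∀ (k : ℕ) (p : Fin n) (q : Fin N) (x : ℝ),
    (stg n N hn hN k).Psi p q x = ∑ j ∈ Finset.range (k+1), (stg n N hn hN j).g p q x := by
  intro k
  induction k with
  | zero =>
    intro p q x
    rw [Finset.sum_range_one, stg_zero]
    simp [sd0]
  | succ k ih =>
    intro p q x
    rw [(stg_good n N hn hN k).1 p q x, Finset.sum_range_succ, ih]

/-- the universal inner functions -/
noncomputable def psi (hn : 1 ≤ n) (hN : 2 ≤ N) (p : Fin n) (q : Fin N) (x : ℝ) : ℝ :=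
  1/4 + ∑' j : ℕ, (stg n N hn hN j).g p q x

lemma psi_summable (hn : 1 ≤ n) (hN : 2 ≤ N) (p : Fin n) (q : Fin N) (x : ℝ) :
    Summable (fun j : ℕ => (stg n N hn hN j).g p q x) := by
  apply Summable.of_abs
  apply Summable.of_nonneg_of_le (fun j => abs_nonneg _)
    (fun j => stg_g_bound' n N hn hN j p q x)
  exact summable_geometric_of_lt_one (by norm_num) (by norm_num)

lemma psi_continuous (hn : 1 ≤ n) (hN : 2 ≤ N) (p : Fin n) (q : Fin N) :
    Continuous (psi n N hn hN p q) := by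
  unfold psi
  apply Continuous.add continuous_const
  apply continuous_tsum
  · intro j
    cases j with
    | zero =>
      rw [stg_zero]
      exact continuous_const
    | succ j =>
      -- continuity of stage (j+1) g : from Good we don't directly carry it; derive from Psi
      have h1 := (stg_good n N hn hN j).1 p q
      have hc1 : Continuous ((stg n N hn hN (j+1)).Psi p q) := (stg_inv n N hn hN (j+1)).1 p q
      have hc0 : Continuous ((stg n N hn hN j).Psi p q) := (stg_inv n N hn hN j).1 p q
      have : (stg n N hn hN (j+1)).g p q =
          fun x => (stg n N hn hN (j+1)).Psi p q x - (stg n N hn hN j).Psi p q x := by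
        funext x
        rw [h1 x]
        ring
      rw [this]
      exact hc1.sub hc0
  · exact summable_geometric_of_lt_one (r := (1:ℝ)/2) (by norm_num) (by norm_num)
  · intro j x
    rw [Real.norm_eq_abs]
    exact stg_g_bound' n N hn hN j p q x

/-- tail estimate : ψ is within `m_k/(8(n+1))` of `1/4 + Ψ_k`. -/
lemma psi_tail (hn : 1 ≤ n) (hN : 2 ≤ N) (k : ℕ) (p : Fin n) (q : Fin N) (x : ℝ) :
    |psi n N hn hN p q x - (1/4 + (stg n N hn hN k).Psi p q x)|
      ≤ (stg n N hn hN k).m / (8*(n+1)) := by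
  have hsum := psi_summable n N hn hN p q x
  have hsplit := Summable.sum_add_tsum_nat_add (f := fun j : ℕ => (stg n N hn hN j).g p q x) (k+1) hsum
  have e1 : psi n N hn hN p q x - (1/4 + (stg n N hn hN k).Psi p q x)
      = ∑' i : ℕ, (stg n N hn hN (i + (k+1))).g p q x := by
    unfold psi
    rw [stg_psi_sum n N hn hN k p q x]
    linarith [hsplit]
  rw [e1]
  -- bound each term
  set Ck := (stg n N hn hN k).cap with hCk
  set mk := (stg n N hn hN k).m with hmk
  have hmk0 : 0 < mk := (stg_inv n N hn hN k).2.2.2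
  have hbnd : ∀ i : ℕ, |(stg n N hn hN (i + (k+1))).g p q x|
      ≤ (mk * 2^k * (1/2)^(k+1) / (8*(n+1))) * (1/2)^i := by
    intro i
    have h1 : i + (k+1) = (i + k) + 1 := by omega
    rw [h1]
    have h2 := stg_g_bound n N hn hN (i+k) p q x
    have h3 : (stg n N hn hN (i+k)).cap ≤ Ck := stg_cap_mono n N hn hN k (i+k) (by omega)
    have h4 : Ck ≤ mk * 2^k := stg_cap_m n N hn hN k
    have h5 : ((1:ℝ)/2)^(i+k+1) = (1/2)^(k+1) * (1/2)^i := by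
      rw [← pow_add]
      congr 1
      omega
    have h6 : (0:ℝ) < 8*((n:ℝ)+1) := by positivity
    calc |(stg n N hn hN ((i+k)+1)).g p q x|
        ≤ (stg n N hn hN (i+k)).cap * (1/2)^((i+k)+1) / (8*(n+1)) := h2
      _ ≤ (mk * 2^k) * (1/2)^((i+k)+1) / (8*(n+1)) := by
          gcongr
          exact le_trans h3 h4
      _ = (mk * 2^k * (1/2)^(k+1) / (8*(n+1))) * (1/2)^i := by
          rw [show (i+k)+1 = i+(k+1) by omega, pow_add]
          ring
  have hgeom : Summable (fun i : ℕ => (mk * 2^k * (1/2)^(k+1) / (8*(n+1))) * ((1:ℝ)/2)^i) :=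
    (summable_geometric_of_lt_one (by norm_num) (by norm_num)).mul_left _
  have habs : Summable (fun i : ℕ => |(stg n N hn hN (i + (k+1))).g p q x|) :=
    Summable.of_nonneg_of_le (fun i => abs_nonneg _) hbnd hgeom
  calc |∑' i : ℕ, (stg n N hn hN (i + (k+1))).g p q x|
      ≤ ∑' i : ℕ, |(stg n N hn hN (i + (k+1))).g p q x| := by
        have := norm_tsum_le_tsum_norm (f := fun i : ℕ => (stg n N hn hN (i + (k+1))).g p q x) habs
        simpa [Real.norm_eq_abs] using this
    _ ≤ ∑' i : ℕ, (mk * 2^k * (1/2)^(k+1) / (8*(n+1))) * ((1:ℝ)/2)^i :=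
        Summable.tsum_le_tsum hbnd habs hgeom
    _ = (mk * 2^k * (1/2)^(k+1) / (8*(n+1))) * (1-1/2)⁻¹ := by
        rw [tsum_mul_left, tsum_geometric_of_lt_one (by norm_num) (by norm_num)]
    _ = mk * ((2:ℝ)*(1/2))^k * ((1/2) * ((1:ℝ)-1/2)⁻¹) / (8*(n+1)) := by
        rw [mul_pow, pow_succ]
        ring
    _ = mk / (8*(n+1)) := by
        norm_num

lemma psi_range (hn : 1 ≤ n) (hN : 2 ≤ N) (p : Fin n) (q : Fin N) (x : ℝ) :
    psi n N hn hN p q x ∈ Set.Icc (0:ℝ) 1 := by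
  have h1 := psi_tail n N hn hN 0 p q x
  rw [stg_zero] at h1
  simp only [sd0] at h1
  have h2 : (0:ℝ) < 8*((n:ℝ)+1) := by positivity
  have h3 : (1:ℝ) / (8*((n:ℝ)+1)) ≤ 1/8 := by
    rw [div_le_div_iff₀ h2 (by norm_num)]
    have : (0:ℝ) ≤ (n:ℝ) := Nat.cast_nonneg n
    nlinarith
  rw [abs_le] at h1
  constructor <;> [nlinarith [h1.1]; nlinarith [h1.2]]


/-! ### the approximation step -/

set_option maxHeartbeats 3200000 in
lemma approx_step (n N : ℕ) (hn : 1 ≤ n) (hN2 : 2 ≤ N) (hN : N = 2*n+1)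
    (F : (Fin n → ℝ) → ℝ) (hF : ContinuousOn F (Set.Icc 0 1)) (b : ℝ) (hb0 : 0 ≤ b)
    (hFb : ∀ x ∈ Set.Icc (0:Fin n → ℝ) 1, |F x| ≤ b) :
    ∃ χ : Fin N → ℝ → ℝ,
      (∀ q, Continuous (χ q)) ∧
      (∀ q y, |χ q y| ≤ b/(n+1)) ∧
      (∀ x ∈ Set.Icc (0:Fin n → ℝ) 1,
        |F x - ∑ q, χ q (∑ p, psi n N hn hN2 p q (x p))| ≤ ((2*(n:ℝ)+1)/(2*(n:ℝ)+2)) * b) := by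
  classical
  have hn1 : (1:ℝ) ≤ (n:ℝ) := by exact_mod_cast hn
  rcases eq_or_lt_of_le hb0 with hb | hb
  · -- b = 0 : F vanishes on the cube
    refine ⟨fun _ _ => 0, fun q => continuous_const, fun q y => by simp; positivity, ?_⟩
    intro x hx
    simp only [Finset.sum_const_zero, sub_zero]
    have h1 := hFb x hx
    rw [← hb] at h1 ⊢
    have h2 : (0:ℝ) ≤ (2*(n:ℝ)+1)/(2*(n:ℝ)+2) := by positivity
    simpa using h1
  · -- b > 0
    set ε : ℝ := b/(2*((n:ℝ)+1)) with hεdef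
    have hε : 0 < ε := by positivity
    have hcube : IsCompact (Set.Icc (0:Fin n → ℝ) 1) := isCompact_Icc
    have hUC := hcube.uniformContinuousOn_of_continuous hF
    rw [Metric.uniformContinuousOn_iff_le] at hUC
    obtain ⟨dd, hdd, hmod⟩ := hUC ε hε
    have hNd : (0:ℝ) < dd/N := by positivity
    obtain ⟨k0, hk0⟩ := exists_pow_lt_of_lt_one hNd (by norm_num : (1:ℝ)/2 < 1)
    set K1 : ℕ := k0 + 1 with hK1def
    set S := stg n N hn hN2 K1 with hSdef
    have hS := stg_good n N hn hN2 k0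
    rw [← hK1def, ← hSdef] at hS
    obtain ⟨-, -, ⟨hh, hhb⟩, ⟨hm, -⟩, hpl, hsep, -, -⟩ := hS
    set h : ℝ := S.h with hhdef
    set m : ℝ := S.m with hmdef
    set τ : ℝ := m / (8*((n:ℝ)+1)) with hτdef
    have hτ0 : 0 < τ := by positivity
    set σ : ℝ := (n:ℝ) * τ with hσdef
    have hσ0 : 0 < σ := by positivity
    have hmτ : m = 8*((n:ℝ)+1)*τ := by
      rw [hτdef]
      field_simp
    have hNh : (N:ℝ) * h < dd := by
      have h1 : (N:ℝ) * h ≤ (N:ℝ) * (1/2)^K1 := by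
        apply mul_le_mul_of_nonneg_left hhb (by positivity)
      have h2 : (N:ℝ) * (1/2)^K1 < (N:ℝ) * ((1/2)^k0) := by
        apply mul_lt_mul_of_pos_left _ (by positivity)
        rw [hK1def, pow_succ]
        have h0 : (0:ℝ) < (1/2)^k0 := by positivity
        linarith
      have h3 : (N:ℝ) * ((1/2)^k0) < (N:ℝ) * (dd/N) := by
        apply mul_lt_mul_of_pos_left hk0 (by positivity)
      have h4 : (N:ℝ) * (dd/N) = dd := by
        field_simp
      linarith
    set V : Fin N → (Fin n → ℤ) → ℝ := fun q t => (n:ℝ)/4 + ∑ p, S.c p q (t p) with hVdef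
    set T : Finset (Fin n → ℤ) := Fintype.piFinset (fun _ => Finset.Icc (-2:ℤ) ⌈1/h⌉) with hTdef
    have hTmem : ∀ t : Fin n → ℤ, t ∈ T ↔ ∀ p, -2 ≤ t p ∧ t p ≤ ⌈1/h⌉ := by
      intro t
      rw [hTdef, Fintype.mem_piFinset]
      constructor
      · intro hx p
        have := hx p
        rwa [Finset.mem_Icc] at this
      · intro hx p
        rw [Finset.mem_Icc]
        exact hx p
    -- image estimate
    have himg : ∀ (q : Fin N) (t : Fin n → ℤ), (∀ p, -2 ≤ t p ∧ t p ≤ ⌈1/h⌉) →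
        ∀ x : Fin n → ℝ, (∀ p, x p ∈ Set.Icc (glo N q h (t p)) (ghi N q h (t p))) →
        |(∑ p, psi n N hn hN2 p q (x p)) - V q t| ≤ σ := by
      intro q t htr x hx
      have key : ∀ p : Fin n, S.Psi p q (x p) = S.c p q (t p) := fun p =>
        hpl p q (t p) (htr p).1 (htr p).2 (x p) (hx p)
      have e1 : (∑ p, psi n N hn hN2 p q (x p)) - V q t
          = ∑ p, (psi n N hn hN2 p q (x p) - (1/4 + S.Psi p q (x p))) := by
      -- rewrite with key, then split
        have e2 : ∀ p : Fin n, psi n N hn hN2 p q (x p) - (1/4 + S.Psi p q (x p))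
            = psi n N hn hN2 p q (x p) - (1/4 + S.c p q (t p)) := by
          intro p
          rw [key p]
        rw [Finset.sum_congr rfl (fun p _ => e2 p), hVdef]
        simp only []
        rw [Finset.sum_sub_distrib, Finset.sum_add_distrib, Finset.sum_const,
          Finset.card_univ, Fintype.card_fin, nsmul_eq_mul]
        ring
      rw [e1]
      calc |∑ p, (psi n N hn hN2 p q (x p) - (1/4 + S.Psi p q (x p)))|
          ≤ ∑ p, |psi n N hn hN2 p q (x p) - (1/4 + S.Psi p q (x p))| :=
            Finset.abs_sum_le_sum_abs _ _
        _ ≤ (Finset.univ : Finset (Fin n)).card • τ := by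
            apply Finset.sum_le_card_nsmul
            intro p _
            exact psi_tail n N hn hN2 K1 p q (x p)
        _ = σ := by
            rw [Finset.card_univ, Fintype.card_fin, nsmul_eq_mul, hσdef]
    -- separation of plateau values
    have hVsep : ∀ (q : Fin N) (t t' : Fin n → ℤ), t ∈ T → t' ∈ T → t ≠ t' →
        8*((n:ℝ)+1)*τ ≤ |V q t - V q t'| := by
      intro q t t' ht ht' htne
      have h1 := hsep q t t' ((hTmem t).1 ht) ((hTmem t').1 ht') htne
      rw [hVdef]
      simp only []
      rw [show (n:ℝ)/4 + ∑ p, S.c p q (t p) - ((n:ℝ)/4 + ∑ p, S.c p q (t' p))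
        = (∑ p, S.c p q (t p)) - ∑ p, S.c p q (t' p) by ring]
      rw [← hmτ]
      exact h1
    -- the clamped base points
    set z : Fin N → (Fin n → ℤ) → (Fin n → ℝ) :=
      fun q t p => max 0 (min 1 (glo N q h (t p))) with hzdef
    have hzcube : ∀ q t, z q t ∈ Set.Icc (0:Fin n → ℝ) 1 := by
      intro q t
      rw [Set.mem_Icc]
      constructor <;> intro p
      · exact le_max_left _ _
      · show z q t p ≤ 1
        rw [hzdef]
        simp only []
        apply max_le (by norm_num) (min_le_left _ _)
    -- the outer functions
    set χ : Fin N → ℝ → ℝ := fun q y => ∑ t ∈ T, (F (z q t)/((n:ℝ)+1)) * tent σ (V q t) y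
      with hχdef
    have hχcont : ∀ q, Continuous (χ q) := by
      intro q
      rw [hχdef]
      apply continuous_finset_sum
      intro t _
      exact continuous_const.mul (continuous_tent hσ0 (V q t))
    have hχbound : ∀ q y, |χ q y| ≤ b/((n:ℝ)+1) := by
      intro q y
      rw [hχdef]
      simp only []
      apply sum_bound_of_unique T _ _ (b/((n:ℝ)+1)) (by positivity)
        (fun t => tent_nonneg _ _ _) (fun t => tent_le_one hσ0 _ _)
      · intro t ht t' ht' hu hu'
        by_contra hne
        have h4 : 8*((n:ℝ)+1)*τ ≤ |V q t - V q t'| := hVsep q t t' ht ht' hne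
        have h5 : |y - V q t| < 2*σ := by
          by_contra hc
          push_neg at hc
          exact hu (tent_eq_zero hσ0 hc)
        have h6 : |y - V q t'| < 2*σ := by
          by_contra hc
          push_neg at hc
          exact hu' (tent_eq_zero hσ0 hc)
        have h7 : |V q t - V q t'| < 4*σ := by
          calc |V q t - V q t'| = |(y - V q t') - (y - V q t)| := by congr 1; ring
            _ ≤ |y - V q t'| + |y - V q t| := abs_sub _ _
            _ < 4*σ := by linarith
        rw [hσdef] at h7
        nlinarith
      · intro t _
        rw [abs_div, abs_of_nonneg (by positivity : (0:ℝ) ≤ (n:ℝ)+1)]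
        gcongr
        exact hFb (z q t) (hzcube q t)
    refine ⟨χ, hχcont, ?_, ?_⟩
    · intro q y
      exact hχbound q y
    -- the error estimate
    intro x hx
    rw [Set.mem_Icc] at hx
    have hxc : ∀ p : Fin n, x p ∈ Set.Icc (0:ℝ) 1 := fun p => ⟨hx.1 p, hx.2 p⟩
    set y : Fin N → ℝ := fun q => ∑ p, psi n N hn hN2 p q (x p) with hydef
    -- the set of good families
    set G : Finset (Fin N) := Finset.univ.filter (fun q : Fin N => ∀ p, Cov N h (x p) (q:ℕ))
      with hGdef
    have hGcard : (n:ℕ) + 1 ≤ G.card := by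
      have hinj : ∀ q ∈ Finset.univ \ G, ∃ p : Fin n, ¬ Cov N h (x p) (q:ℕ) := by
        intro q hq
        rw [Finset.mem_sdiff, hGdef, Finset.mem_filter] at hq
        push_neg at hq
        exact hq.2 (Finset.mem_univ q)
      set pick : Fin N → Fin n := fun q =>
        if hex : ∃ p : Fin n, ¬ Cov N h (x p) (q:ℕ) then Classical.choose hex
        else ⟨0, hn⟩ with hpickdef
      have hpick : ∀ q ∈ Finset.univ \ G, ¬ Cov N h (x (pick q)) (q:ℕ) := by
        intro q hq
        have hex := hinj q hq
        rw [hpickdef]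
        simp only [dif_pos hex]
        exact Classical.choose_spec hex
      have hcard1 : (Finset.univ \ G).card ≤ (Finset.univ : Finset (Fin n)).card := by
        apply Finset.card_le_card_of_injOn pick (fun q _ => Finset.mem_univ _)
        intro q hq q' hq' hpp
        rw [Finset.mem_coe] at hq hq'
        have h1 := hpick q hq
        have h2 := hpick q' hq'
        rw [hpp] at h1
        have := cov_unique N hN2 h hh (x (pick q')) (hxc (pick q')) (q:ℕ) (q':ℕ) q.2 q'.2 h1 h2
        exact Fin.ext this
      rw [Finset.card_univ, Fintype.card_fin] at hcard1
      have hsd : (Finset.univ \ G).card = N - G.card := by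
        rw [Finset.card_sdiff_of_subset (Finset.subset_univ G), Finset.card_univ, Fintype.card_fin]
      have hGle : G.card ≤ N := by
        calc G.card ≤ (Finset.univ : Finset (Fin N)).card := Finset.card_le_card (Finset.subset_univ G)
          _ = N := by rw [Finset.card_univ, Fintype.card_fin]
      omega
    obtain ⟨G', hG'sub, hG'card⟩ := Finset.exists_subset_card_eq hGcard
    -- good term estimate
    have hterm : ∀ q ∈ G', |F x/((n:ℝ)+1) - χ q (y q)| ≤ ε/((n:ℝ)+1) := by
      intro q hqG'
      have hqG : q ∈ G := hG'sub hqG'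
      rw [hGdef, Finset.mem_filter] at hqG
      have hcov := hqG.2
      -- extract the covering tuple
      have hex : ∃ t : Fin n → ℤ, (∀ p, -2 ≤ t p ∧ t p ≤ ⌈1/h⌉) ∧
          ∀ p, x p ∈ Set.Icc (glo N q h (t p)) (ghi N q h (t p)) := by
        choose i h1 h2 h3 h4 using hcov
        refine ⟨i, fun p => ⟨h1 p, h2 p⟩, fun p => ⟨h3 p, ?_⟩⟩
        rw [← ghi_cast]
        exact h4 p
      obtain ⟨t, htr, htx⟩ := hex
      have htT : t ∈ T := (hTmem t).2 htr
      have himgq : |y q - V q t| ≤ σ := himg q t htr x htx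
      -- χ q (y q) collapses to a single term
      have hcollapse : χ q (y q) = F (z q t)/((n:ℝ)+1) := by
        rw [hχdef]
        simp only []
        have hsingle : ∑ t' ∈ T, (F (z q t')/((n:ℝ)+1)) * tent σ (V q t') (y q)
            = (F (z q t)/((n:ℝ)+1)) * tent σ (V q t) (y q) := by
          apply Finset.sum_eq_single_of_mem t htT
          intro t' ht'T ht'ne
          have hVd : 8*((n:ℝ)+1)*τ ≤ |V q t' - V q t| := hVsep q t' t ht'T htT ht'ne
          have hfar : 2*σ ≤ |y q - V q t'| := by
            have h1 := abs_sub (y q - V q t) (y q - V q t')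
            rw [show (y q - V q t) - (y q - V q t') = V q t' - V q t by ring] at h1
            rw [hσdef]
            nlinarith
          rw [tent_eq_zero hσ0 hfar, mul_zero]
        rw [hsingle, tent_eq_one hσ0 himgq, mul_one]
      rw [hcollapse]
      -- distance between x and base point
      have hdist : dist x (z q t) ≤ (N:ℝ) * h := by
        rw [dist_pi_le_iff (by positivity)]
        intro p
        rw [Real.dist_eq]
        have h1 := (htx p).1
        have h2 := (htx p).2
        have h3 := (hxc p).1
        have h4 := (hxc p).2
        have hghig : ghi N q h (t p) = glo N q h (t p) + ((N:ℝ)-1)*h := rfl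
        have hNm1 : (0:ℝ) ≤ ((N:ℝ)-1)*h := by
          have h2N : (2:ℝ) ≤ N := by exact_mod_cast hN2
          nlinarith
        have hz : z q t p = max 0 (min 1 (glo N q h (t p))) := rfl
        rcases le_or_gt 0 (glo N q h (t p)) with hc | hc
        · have hg1 : glo N q h (t p) ≤ 1 := le_trans h1 h4
          rw [hz, min_eq_right hg1, max_eq_right hc, abs_le]
          constructor
          · linarith
          · rw [hghig] at h2
            have : (2:ℝ) ≤ N := by exact_mod_cast hN2
            nlinarith
        · have hg1 : glo N q h (t p) ≤ 1 := by linarith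
          rw [hz, min_eq_right hg1, max_eq_left (le_of_lt hc), abs_le]
          constructor
          · have : (2:ℝ) ≤ N := by exact_mod_cast hN2
            nlinarith
          · rw [hghig] at h2
            have : (2:ℝ) ≤ N := by exact_mod_cast hN2
            nlinarith
      have hFdiff : |F x - F (z q t)| ≤ ε := by
        have := hmod x (Set.mem_Icc.2 hx) (z q t) (hzcube q t) (le_trans hdist (le_of_lt hNh))
        rwa [Real.dist_eq] at this
      rw [div_sub_div_same, abs_div, abs_of_nonneg (by positivity : (0:ℝ) ≤ (n:ℝ)+1)]
      gcongr
    -- split the sum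
    have hsplit : ∑ q : Fin N, χ q (y q)
        = (∑ q ∈ G', χ q (y q)) + ∑ q ∈ Finset.univ \ G', χ q (y q) := by
      rw [add_comm, Finset.sum_sdiff (Finset.subset_univ G')]
    have hFsum : F x = ∑ q ∈ G', F x/((n:ℝ)+1) := by
      rw [Finset.sum_const, hG'card, nsmul_eq_mul]
      push_cast
      field_simp
    have hbadcard : (Finset.univ \ G').card = n := by
      rw [Finset.card_sdiff_of_subset (Finset.subset_univ G'), Finset.card_univ, Fintype.card_fin, hG'card]
      omega
    calc |F x - ∑ q : Fin N, χ q (y q)|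
        = |(∑ q ∈ G', (F x/((n:ℝ)+1) - χ q (y q)))
            - ∑ q ∈ Finset.univ \ G', χ q (y q)| := by
          rw [Finset.sum_sub_distrib, ← hFsum, hsplit]
          congr 1
          ring
      _ ≤ |∑ q ∈ G', (F x/((n:ℝ)+1) - χ q (y q))|
            + |∑ q ∈ Finset.univ \ G', χ q (y q)| := abs_sub _ _
      _ ≤ (∑ q ∈ G', |F x/((n:ℝ)+1) - χ q (y q)|)
            + ∑ q ∈ Finset.univ \ G', |χ q (y q)| := by
          apply add_le_add (Finset.abs_sum_le_sum_abs _ _) (Finset.abs_sum_le_sum_abs _ _)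
      _ ≤ G'.card • (ε/((n:ℝ)+1)) + (Finset.univ \ G').card • (b/((n:ℝ)+1)) := by
          apply add_le_add
          · exact Finset.sum_le_card_nsmul _ _ _ (fun q hq => hterm q hq)
          · exact Finset.sum_le_card_nsmul _ _ _ (fun q _ => hχbound q (y q))
      _ = ((n:ℝ)+1) * (ε/((n:ℝ)+1)) + (n:ℝ) * (b/((n:ℝ)+1)) := by
          rw [hG'card, hbadcard]
          push_cast
          ring
      _ = ε + (n:ℝ) * b/((n:ℝ)+1) := by
          field_simp
      _ = ((2*(n:ℝ)+1)/(2*(n:ℝ)+2)) * b := by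
          rw [hεdef]
          field_simp
          ring

/-! ### iteration and final assembly -/

end  -- close noncomputable section inside KST
end KST

set_option maxHeartbeats 3200000 in
theorem kolmogorov_superposition_universal_inner (n : ℕ) (hn : 2 ≤ n) :
    ∃ ψ : Fin n → Fin (2 * n + 1) → ℝ → ℝ,
      (∀ p q, ContinuousOn (ψ p q) (Set.Icc 0 1) ∧
        Set.MapsTo (ψ p q) (Set.Icc 0 1) (Set.Icc 0 1)) ∧
      ∀ f : (Fin n → ℝ) → ℝ, ContinuousOn f (Set.Icc 0 1) →
        ∃ χ : Fin (2 * n + 1) → ℝ → ℝ,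
          (∀ q, Continuous (χ q)) ∧
          (∀ x ∈ Set.Icc (0 : Fin n → ℝ) 1,
            f x = ∑ q : Fin (2 * n + 1), χ q (∑ p : Fin n, ψ p q (x p))) := by
  classical
  set N : ℕ := 2 * n + 1 with hNdef
  have hn1 : 1 ≤ n := by omega
  have hN2 : 2 ≤ N := by omega
  have hNeq : N = 2 * n + 1 := rfl
  set ψ : Fin n → Fin N → ℝ → ℝ := KST.psi n N hn1 hN2 with hψdef
  refine ⟨ψ, ?_, ?_⟩
  · intro p q
    exact ⟨(KST.psi_continuous n N hn1 hN2 p q).continuousOn,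
      fun x _ => KST.psi_range n N hn1 hN2 p q x⟩
  intro f hf
  -- initial bound
  obtain ⟨b₀', hb₀'⟩ := (isCompact_Icc : IsCompact (Set.Icc (0:Fin n → ℝ) 1)).exists_bound_of_continuousOn hf
  set b₀ : ℝ := max b₀' 0 with hb₀def
  have hb₀0 : 0 ≤ b₀ := le_max_right _ _
  have hb₀ : ∀ x ∈ Set.Icc (0:Fin n → ℝ) 1, |f x| ≤ b₀ := by
    intro x hx
    calc |f x| = ‖f x‖ := (Real.norm_eq_abs _).symm
      _ ≤ b₀' := hb₀' x hx
      _ ≤ b₀ := le_max_left _ _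
  set θ : ℝ := (2*(n:ℝ)+1)/(2*(n:ℝ)+2) with hθdef
  have hθ0 : 0 ≤ θ := by positivity
  have hθ1 : θ < 1 := by
    rw [hθdef, div_lt_one (by positivity)]
    linarith
  -- the iteration states
  set StP : (((Fin n → ℝ) → ℝ) × ℝ) → Prop := fun v =>
    ContinuousOn v.1 (Set.Icc 0 1) ∧ 0 ≤ v.2 ∧ ∀ x ∈ Set.Icc (0:Fin n → ℝ) 1, |v.1 x| ≤ v.2
    with hStPdef
  have hstep : ∀ v : (((Fin n → ℝ) → ℝ) × ℝ), StP v →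
      ∃ χs : Fin N → ℝ → ℝ,
        (∀ q, Continuous (χs q)) ∧
        (∀ q y, |χs q y| ≤ v.2/((n:ℝ)+1)) ∧
        StP (fun x => v.1 x - ∑ q, χs q (∑ p, ψ p q (x p)), θ * v.2) := by
    intro v hv
    obtain ⟨hc, hb, hbd⟩ := hv
    obtain ⟨χs, h1, h2, h3⟩ := KST.approx_step n N hn1 hN2 hNeq v.1 hc v.2 hb hbd
    refine ⟨χs, h1, h2, ?_, by positivity, ?_⟩
    · apply ContinuousOn.sub hc
      apply Continuous.continuousOn
      apply continuous_finset_sum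
      intro q _
      apply (h1 q).comp
      apply continuous_finset_sum
      intro p _
      exact (KST.psi_continuous n N hn1 hN2 p q).comp (continuous_apply p)
    · intro x hx
      rw [← hθdef] at h3
      exact h3 x hx
  -- build the sequence of states and outer functions
  set A : ℕ → {v : (((Fin n → ℝ) → ℝ) × ℝ) // StP v} :=
    Nat.rec ⟨(f, b₀), ⟨hf, hb₀0, hb₀⟩⟩
      (fun _ s => ⟨(fun x => s.1.1 x
          - ∑ q, (Classical.choose (hstep s.1 s.2)) q (∑ p, ψ p q (x p)), θ * s.1.2),
        (Classical.choose_spec (hstep s.1 s.2)).2.2⟩) with hAdef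
  set χs : ℕ → Fin N → ℝ → ℝ := fun m => Classical.choose (hstep (A m).1 (A m).2) with hχsdef
  have hχcont : ∀ m q, Continuous (χs m q) :=
    fun m => (Classical.choose_spec (hstep (A m).1 (A m).2)).1
  have hχbd : ∀ m q y, |χs m q y| ≤ (A m).1.2/((n:ℝ)+1) :=
    fun m => (Classical.choose_spec (hstep (A m).1 (A m).2)).2.1
  have hAsucc : ∀ m, (A (m+1)).1
      = (fun x => (A m).1.1 x - ∑ q, χs m q (∑ p, ψ p q (x p)), θ * (A m).1.2) := by
    intro m
    rfl
  have hAb : ∀ m, (A m).1.2 = θ^m * b₀ := by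
    intro m
    induction m with
    | zero => simp [hAdef]
    | succ m ih =>
      have h1 : (A (m+1)).1.2 = θ * (A m).1.2 := by rw [hAsucc m]
      rw [h1, ih, pow_succ]
      ring
  have hχbd' : ∀ m q y, |χs m q y| ≤ θ^m * (b₀/((n:ℝ)+1)) := by
    intro m q y
    calc |χs m q y| ≤ (A m).1.2/((n:ℝ)+1) := hχbd m q y
      _ = θ^m * (b₀/((n:ℝ)+1)) := by rw [hAb m]; ring
  have hgeo : Summable (fun m : ℕ => θ^m * (b₀/((n:ℝ)+1))) :=
    (summable_geometric_of_lt_one hθ0 hθ1).mul_right _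
  have hχsum : ∀ q y, Summable (fun m => χs m q y) := by
    intro q y
    apply Summable.of_abs
    exact Summable.of_nonneg_of_le (fun m => abs_nonneg _) (fun m => hχbd' m q y) hgeo
  set χ : Fin N → ℝ → ℝ := fun q y => ∑' m, χs m q y with hχdef
  refine ⟨χ, ?_, ?_⟩
  · intro q
    rw [hχdef]
    apply continuous_tsum (fun m => hχcont m q) hgeo
    intro m y
    rw [Real.norm_eq_abs]
    exact hχbd' m q y
  · intro x hx
    -- the outer sum telescopes
    have hswap : ∑ q : Fin N, χ q (∑ p, ψ p q (x p))
        = ∑' m, ∑ q : Fin N, χs m q (∑ p, ψ p q (x p)) := by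
      rw [hχdef]
      exact (Summable.tsum_finsetSum (fun q _ => hχsum q _)).symm
    have htele : ∀ m, ∑ q : Fin N, χs m q (∑ p, ψ p q (x p))
        = (A m).1.1 x - (A (m+1)).1.1 x := by
      intro m
      rw [hAsucc m]
      ring
    -- the values (A m).F x tend to 0
    have hAF : ∀ m, |(A m).1.1 x| ≤ θ^m * b₀ := by
      intro m
      have := (A m).2.2.2 x hx
      rw [hAb m] at this
      exact this
    have hAF0 : Filter.Tendsto (fun m => (A m).1.1 x) Filter.atTop (nhds 0) := by
      apply squeeze_zero_norm _ _
      · exact fun m => θ^m * b₀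
      · intro m
        rw [Real.norm_eq_abs]
        exact hAF m
      · have h1 : Filter.Tendsto (fun m : ℕ => θ^m) Filter.atTop (nhds 0) :=
          tendsto_pow_atTop_nhds_zero_of_lt_one hθ0 hθ1
        have h2 := h1.mul_const b₀
        simpa using h2
    have hsum2 : Summable (fun m => (A m).1.1 x - (A (m+1)).1.1 x) := by
      have hsumg : Summable (fun m : ℕ => 2*(θ^m * b₀)) :=
        ((summable_geometric_of_lt_one hθ0 hθ1).mul_right b₀).mul_left 2
      have hle : ∀ m : ℕ, |(A m).1.1 x - (A (m+1)).1.1 x| ≤ 2*(θ^m * b₀) := by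
        intro m
        have h1 := hAF m
        have h2 := hAF (m+1)
        have h3 : θ^(m+1) * b₀ ≤ θ^m * b₀ := by
          rw [pow_succ]
          have h4 : (0:ℝ) ≤ θ^m := by positivity
          nlinarith [mul_nonneg (mul_nonneg h4 hb₀0) (sub_nonneg.2 hθ1.le)]
        calc |(A m).1.1 x - (A (m+1)).1.1 x| ≤ |(A m).1.1 x| + |(A (m+1)).1.1 x| := abs_sub _ _
          _ ≤ θ^m * b₀ + θ^(m+1) * b₀ := add_le_add h1 h2
          _ ≤ 2*(θ^m * b₀) := by linarith
      exact Summable.of_abs (Summable.of_nonneg_of_le (fun m => abs_nonneg _) hle hsumg)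
    have hpartial : ∀ M : ℕ, ∑ m ∈ Finset.range M, ((A m).1.1 x - (A (m+1)).1.1 x)
        = f x - (A M).1.1 x := by
      intro M
      rw [Finset.sum_range_sub' (fun m => (A m).1.1 x) M]
      have : (A 0).1.1 x = f x := rfl
      rw [this]
    have hlim1 : Filter.Tendsto (fun M => ∑ m ∈ Finset.range M, ((A m).1.1 x - (A (m+1)).1.1 x))
        Filter.atTop (nhds (∑' m, ((A m).1.1 x - (A (m+1)).1.1 x))) :=
      hsum2.hasSum.tendsto_sum_nat
    have hlim2 : Filter.Tendsto (fun M => ∑ m ∈ Finset.range M, ((A m).1.1 x - (A (m+1)).1.1 x))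
        Filter.atTop (nhds (f x)) := by
      have h1 : (fun M => ∑ m ∈ Finset.range M, ((A m).1.1 x - (A (m+1)).1.1 x))
          = (fun M => f x - (A M).1.1 x) := funext hpartial
      rw [h1]
      have h2 : Filter.Tendsto (fun M => f x - (A M).1.1 x) Filter.atTop (nhds (f x - 0)) :=
        (tendsto_const_nhds).sub hAF0
      simpa using h2
    have hfx : ∑' m, ((A m).1.1 x - (A (m+1)).1.1 x) = f x :=
      tendsto_nhds_unique hlim1 hlim2
    rw [hswap]
    rw [tsum_congr htele, hfx]
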